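/- Let q be an odd prime power with q ≡ 1 (mod 4), let g be a primitive element (generator of the multiplicative group) of GF(q), and let χ be the extended quadratic character of GF(q). Define length-(q-1)/2 sequences a, b by a_0 = i, a_k = χ(g^{2k} - 1) for 0 < k < (q-1)/2, and b_k = χ(g^{2k+1} - 1) for 0 ≤ k < (q-1)/2. Then (a,b) is a quaternary Legendre pair: R_a(u) + R_b(u) = -2 for all u ≢ 0 mod (q-1)/2. -/

import Mathlib

open Finset

lemma qlp_sum_range_double {M : Type*} [AddCommMonoid M] (f : ℕ → M) (n : ℕ) :
    ∑ j ∈ range (2 * n), f j = ∑ k ∈ range n, (f (2 * k) + f (2 * k + 1)) := by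
  induction n with
  | zero => simp
  | succ n ih =>
    rw [Nat.mul_succ, sum_range_succ, sum_range_succ, sum_range_succ, ih, add_assoc]


lemma qlp_shift_sum {F : Type*} [Field F] [Fintype F] [DecidableEq F]
    (hF : ringChar F ≠ 2) (d : F) (hd : d ≠ 0) :
    ∑ y : F, quadraticChar F y * quadraticChar F (y + d) = -1 := by
  rw [← Finset.sum_sdiff (Finset.subset_univ {(0 : F)}), Finset.sum_singleton]
  rw [quadraticChar_zero, zero_mul, add_zero]
  have h1 : ∀ y ∈ (univ \ {(0:F)}), quadraticChar F y * quadraticChar F (y + d)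
      = quadraticChar F (1 + d * y⁻¹) := by
    intro y hy
    have hy0 : y ≠ 0 := by simpa using hy
    have : y + d = y * (1 + d * y⁻¹) := by field_simp
    rw [this, map_mul, ← mul_assoc, ← sq, quadraticChar_sq_one hy0, one_mul]
  rw [Finset.sum_congr rfl h1]
  have h2 : ∑ y ∈ (univ \ {(0:F)}), quadraticChar F (1 + d * y⁻¹)
      = ∑ z ∈ (univ \ {(1:F)}), quadraticChar F z := by
    apply Finset.sum_nbij' (fun y => 1 + d * y⁻¹) (fun z => d * (z - 1)⁻¹)
    · intro y hy
      have hy0 : y ≠ 0 := by simpa using hy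
      simp only [mem_sdiff, mem_univ, mem_singleton, true_and]
      intro h
      apply hy0
      have : d * y⁻¹ = 0 := by linear_combination h
      rcases mul_eq_zero.mp this with h' | h'
      · exact absurd h' hd
      · simpa using inv_eq_zero.mp h' ▸ (inv_eq_zero.mp h')
    · intro z hz
      have hz1 : z ≠ 1 := by simpa using hz
      simp only [mem_sdiff, mem_univ, mem_singleton, true_and]
      exact mul_ne_zero hd (inv_ne_zero (sub_ne_zero.mpr hz1))
    · intro y hy
      have hy0 : y ≠ 0 := by simpa using hy
      field_simp
      rw [add_sub_cancel_left, div_self hd]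
    · intro z hz
      have hz1 : z ≠ 1 := by simpa using hz
      have : z - 1 ≠ 0 := sub_ne_zero.mpr hz1
      field_simp
      ring
    · intro y hy; rfl
  rw [h2]
  have := quadraticChar_sum_zero hF
  rw [← Finset.sum_sdiff (Finset.subset_univ {(1 : F)}), Finset.sum_singleton, map_one] at this
  omega

lemma qlp_corr {F : Type*} [Field F] [Fintype F] [DecidableEq F]
    (hF : ringChar F ≠ 2) (h4 : Fintype.card F % 4 = 1)
    (c : F) (hc1 : c ≠ 1) (hcsq : quadraticChar F c = 1) :
    ∑ x ∈ univ.filter (fun x : F => x ≠ 0),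
      quadraticChar F (x - 1) * quadraticChar F (c * x - 1) = -2 := by
  have hc0 : c ≠ 0 := by
    intro h; rw [h] at hcsq; simp [quadraticChar_zero] at hcsq
  have hneg1 : quadraticChar F (-1) = 1 := by
    rw [quadraticChar_neg_one hF, ZMod.χ₄_nat_one_mod_four h4]
  have hJ : ∑ x : F, quadraticChar F (x - 1) * quadraticChar F (c * x - 1) = -1 := by
    have hre : ∑ x : F, quadraticChar F (x - 1) * quadraticChar F (c * x - 1)
        = ∑ y : F, quadraticChar F y * quadraticChar F (y + (c - 1) * c⁻¹) := by
      rw [← Equiv.sum_comp (Equiv.addRight (1 : F))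
        (fun x => quadraticChar F (x - 1) * quadraticChar F (c * x - 1))]
      apply Finset.sum_congr rfl
      intro y _
      simp only [Equiv.coe_addRight, add_sub_cancel_right]
      congr 1
      have : c * (y + 1) - 1 = c * (y + (c - 1) * c⁻¹) := by field_simp; ring
      rw [this, map_mul, hcsq, one_mul]
    rw [hre]
    exact qlp_shift_sum hF _ (mul_ne_zero (sub_ne_zero.mpr hc1) (inv_ne_zero hc0))
  have hfe : univ.filter (fun x : F => x ≠ 0) = univ \ {(0 : F)} := by
    ext x; simp
  have := Finset.sum_sdiff (Finset.subset_univ {(0 : F)})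
    (f := fun x => quadraticChar F (x - 1) * quadraticChar F (c * x - 1))
  rw [hJ, Finset.sum_singleton] at this
  rw [hfe]
  have h0 : quadraticChar F ((0:F) - 1) * quadraticChar F (c * 0 - 1) = 1 := by
    rw [mul_zero, zero_sub]
    simp [hneg1]
  beta_reduce at this ⊢
  rw [h0] at this
  omega

open Finset Complex in
/-- First construction (Theorem 1(ii)): for an odd prime power `q ≡ 1 (mod 4)`, with
`g` a primitive element of `GF(q)` and `χ` the extended quadratic character, the
length-`(q-1)/2` sequences `a` (with `a_0 = i`, `a_k = χ(g^{2k}-1)` otherwise) and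
`b` (with `b_k = χ(g^{2k+1}-1)`) form a quaternary Legendre pair. -/
theorem first_construction_q1mod4 (F : Type*) [Field F] [Fintype F] [DecidableEq F]
    (N : ℕ) [NeZero N] (hcard : Fintype.card F = 2 * N + 1)
    (hq4 : Fintype.card F % 4 = 1)
    (g : F) (hg : orderOf g = Fintype.card F - 1)
    (χ : F → ℤ)
    (hχ : ∀ α : F, χ α = if α = 0 then 0 else if IsSquare α then 1 else -1)
    (a b : ZMod N → ℂ)
    (ha0 : a 0 = I)
    (ha : ∀ k : ZMod N, k ≠ 0 → a k = (χ (g ^ (2 * k.val) - 1) : ℤ))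
    (hb : ∀ k : ZMod N, b k = (χ (g ^ (2 * k.val + 1) - 1) : ℤ)) :
    ∀ u : ZMod N, u ≠ 0 →
      (∑ k : ZMod N, a k * (starRingEnd ℂ) (a (k + u))) +
        ∑ k : ZMod N, b k * (starRingEnd ℂ) (b (k + u)) = -2 := by
  intro u hu
  have hN : 0 < N := Nat.pos_of_ne_zero (NeZero.ne N)
  have hord : orderOf g = 2 * N := by rw [hg, hcard]; omega
  have hg0 : g ≠ 0 := by
    intro h
    have h1 := pow_orderOf_eq_one g
    rw [hord, h, zero_pow (by omega)] at h1
    exact zero_ne_one h1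
  have hF2 : ringChar F ≠ 2 := by
    intro h
    have := FiniteField.even_card_of_char_two h
    omega
  have hχq : ∀ α : F, χ α = quadraticChar F α := by
    intro α
    rw [hχ, quadraticChar_apply, quadraticCharFun]
  have hneg1 : quadraticChar F (-1 : F) = 1 := by
    rw [quadraticChar_neg_one hF2, ZMod.χ₄_nat_one_mod_four hq4]
  have hpow : ∀ m l : ℕ, m % (2 * N) = l % (2 * N) → g ^ m = g ^ l := by
    intro m l h
    rw [← pow_mod_orderOf, hord, h, ← hord, pow_mod_orderOf]
  set c := g ^ (2 * u.val) with hc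
  have hc0 : c ≠ 0 := pow_ne_zero _ hg0
  have huval : u.val ≠ 0 := fun h => hu ((ZMod.val_eq_zero u).mp h)
  have huvlt : u.val < N := ZMod.val_lt u
  have hc1 : c ≠ 1 := by
    intro h
    have h2 := orderOf_dvd_of_pow_eq_one h
    rw [hord] at h2
    have := Nat.le_of_dvd (by omega) h2
    omega
  have hcsq : quadraticChar F c = 1 := by
    have h2 : c = (g ^ u.val) ^ 2 := by rw [hc, mul_comm, pow_mul]
    rw [h2]; exact quadraticChar_sq_one' (pow_ne_zero _ hg0)
  have hkey : ∀ k : ZMod N, g ^ (2 * (k + u).val) = g ^ (2 * k.val) * c := by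
    intro k
    rw [hc, ← pow_add]
    apply hpow
    rw [ZMod.val_add]
    have h2 : 2 * ((k.val + u.val) % N) % (2 * N) = (2 * (k.val + u.val)) % (2 * N) :=
      (Nat.mod_modEq (k.val + u.val) N).mul_left' 2
    rw [h2]
    congr 1
    ring
  have hkeyo : ∀ k : ZMod N, g ^ (2 * (k + u).val + 1) = g ^ (2 * k.val + 1) * c := by
    intro k
    rw [pow_succ, hkey k, pow_succ]
    ring
  have hinv : g ^ (2 * (-u).val) * c = 1 := by
    rw [hc, ← pow_add, ← pow_zero g]
    apply hpow
    have h1 : ((-u).val + u.val) % N = 0 := by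
      rw [← ZMod.val_add, neg_add_cancel, ZMod.val_zero]
    obtain ⟨t, ht⟩ := Nat.dvd_of_mod_eq_zero h1
    have h2 : 2 * (-u).val + 2 * u.val = 2 * N * t := by
      rw [mul_assoc, ← ht]; ring
    rw [h2]
    simp [Nat.mul_mod_right]
  have hXm : quadraticChar F (g ^ (2 * (-u).val) - 1) = quadraticChar F (c - 1) := by
    have hrw : g ^ (2 * (-u).val) - 1 = (-(g ^ (2 * (-u).val))) * (c - 1) := by
      linear_combination hinv
    rw [hrw, map_mul]
    have hsq : quadraticChar F (-(g ^ (2 * (-u).val))) = 1 := by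
      have h2 : -(g ^ (2 * (-u).val)) = (-1) * (g ^ ((-u).val)) ^ 2 := by
        rw [← pow_mul, mul_comm ((-u).val) 2]
        ring
      rw [h2, map_mul, hneg1, quadraticChar_sq_one' (pow_ne_zero _ hg0), one_mul]
    rw [hsq, one_mul]
  -- the b-part
  have hbsum : ∑ k : ZMod N, b k * (starRingEnd ℂ) (b (k + u))
      = ∑ k : ZMod N, ((quadraticChar F (g ^ (2 * k.val + 1) - 1) *
          quadraticChar F (g ^ (2 * k.val + 1) * c - 1) : ℤ) : ℂ) := by
    apply Finset.sum_congr rfl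
    intro k _
    rw [hb k, hb (k + u), hkeyo k, hχq, hχq, map_intCast]
    push_cast
    ring
  -- the a-part
  have hu0 : (-u : ZMod N) ≠ 0 := neg_ne_zero.mpr hu
  have h0u : (0 : ZMod N) ≠ -u := fun h => hu0 h.symm
  have hasum : ∑ k : ZMod N, a k * (starRingEnd ℂ) (a (k + u))
      = ∑ k : ZMod N, ((quadraticChar F (g ^ (2 * k.val) - 1) *
          quadraticChar F (g ^ (2 * k.val) * c - 1) : ℤ) : ℂ) := by
    have hsd := Finset.sum_sdiff (f := fun k : ZMod N => a k * (starRingEnd ℂ) (a (k + u)))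
      (subset_univ ({0, -u} : Finset (ZMod N)))
    have hsd2 := Finset.sum_sdiff (f := fun k : ZMod N =>
        ((quadraticChar F (g ^ (2 * k.val) - 1) *
          quadraticChar F (g ^ (2 * k.val) * c - 1) : ℤ) : ℂ))
      (subset_univ ({0, -u} : Finset (ZMod N)))
    rw [← hsd, ← hsd2]
    have hmid : ∀ k ∈ (univ \ ({0, -u} : Finset (ZMod N))),
        a k * (starRingEnd ℂ) (a (k + u)) =
        ((quadraticChar F (g ^ (2 * k.val) - 1) *
          quadraticChar F (g ^ (2 * k.val) * c - 1) : ℤ) : ℂ) := by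
      intro k hk
      simp only [mem_sdiff, mem_univ, mem_insert, mem_singleton, true_and, not_or] at hk
      obtain ⟨hk0, hkmu⟩ := hk
      have hku : k + u ≠ 0 := by
        intro h
        exact hkmu (eq_neg_of_add_eq_zero_left h)
      rw [ha k hk0, ha (k + u) hku, hkey k, hχq, hχq, map_intCast]
      push_cast
      ring
    rw [Finset.sum_congr rfl hmid]
    congr 1
    rw [Finset.sum_pair h0u, Finset.sum_pair h0u]
    have e1 : (0 : ZMod N) + u = u := zero_add u
    have e2 : (-u : ZMod N) + u = 0 := neg_add_cancel u
    rw [e1, e2, ha0, ha u hu, ha (-u) hu0, hχq, hχq, hXm]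
    have hval0 : (0 : ZMod N).val = 0 := ZMod.val_zero
    have hz1 : g ^ (2 * (0 : ZMod N).val) - 1 = 0 := by
      rw [hval0]; simp
    have hz2 : g ^ (2 * (-u : ZMod N).val) * c - 1 = 0 := by
      rw [hinv]; ring
    rw [hz1, hz2, quadraticChar_zero]
    rw [map_intCast, Complex.conj_I]
    push_cast
    ring
  rw [hasum, hbsum, ← Finset.sum_add_distrib]
  -- sum over ZMod N -> range N
  have hzr : ∀ h : ℕ → ℂ, ∑ k : ZMod N, h k.val = ∑ j ∈ range N, h j := by
    intro h
    apply Finset.sum_nbij' (fun k : ZMod N => k.val) (fun j => (j : ZMod N))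
    · intro k _
      exact mem_range.mpr (ZMod.val_lt k)
    · intro j _
      exact mem_univ _
    · intro k _
      exact ZMod.natCast_rightInverse k
    · intro j hj
      exact ZMod.val_cast_of_lt (mem_range.mp hj)
    · intro k _
      rfl
  have hstep : ∑ k : ZMod N,
      (((quadraticChar F (g ^ (2 * k.val) - 1) *
          quadraticChar F (g ^ (2 * k.val) * c - 1) : ℤ) : ℂ) +
       ((quadraticChar F (g ^ (2 * k.val + 1) - 1) *
          quadraticChar F (g ^ (2 * k.val + 1) * c - 1) : ℤ) : ℂ))
      = ∑ j ∈ range (2 * N), ((quadraticChar F (g ^ j - 1) *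
          quadraticChar F (g ^ j * c - 1) : ℤ) : ℂ) := by
    rw [qlp_sum_range_double (fun j => ((quadraticChar F (g ^ j - 1) *
          quadraticChar F (g ^ j * c - 1) : ℤ) : ℂ)) N]
    exact hzr (fun v => ((quadraticChar F (g ^ (2 * v) - 1) *
          quadraticChar F (g ^ (2 * v) * c - 1) : ℤ) : ℂ) +
       ((quadraticChar F (g ^ (2 * v + 1) - 1) *
          quadraticChar F (g ^ (2 * v + 1) * c - 1) : ℤ) : ℂ))
  rw [hstep]
  -- surjectivity of j ↦ g ^ j onto nonzero elements
  have hsurj : ∀ x : F, x ≠ 0 → ∃ j, j ∈ range (2 * N) ∧ g ^ j = x := by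
    intro x hx
    set gu : Fˣ := Units.mk0 g hg0 with hgu
    have hou : orderOf gu = 2 * N := by rw [← orderOf_units, hgu, Units.val_mk0, hord]
    have hcardu : Fintype.card Fˣ = 2 * N := by
      rw [Fintype.card_units, hcard]
      omega
    have htop : Subgroup.zpowers gu = ⊤ := by
      apply Subgroup.eq_top_of_card_eq
      rw [Nat.card_eq_fintype_card, Fintype.card_zpowers, hou, ← hcardu,
        Nat.card_eq_fintype_card]
    have hmem : Units.mk0 x hx ∈ Subgroup.zpowers gu := by rw [htop]; trivial
    rw [← mem_powers_iff_mem_zpowers] at hmem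
    obtain ⟨n, hn⟩ := hmem
    refine ⟨n % (2 * N), mem_range.mpr (Nat.mod_lt _ (by omega)), ?_⟩
    have : g ^ (n % (2 * N)) = g ^ n := by rw [← hord, pow_mod_orderOf]
    rw [this]
    have := congrArg (Units.val) hn
    rw [Units.val_pow_eq_pow_val] at this
    simpa [hgu] using this
  have hrangeF : ∑ j ∈ range (2 * N), ((quadraticChar F (g ^ j - 1) *
          quadraticChar F (g ^ j * c - 1) : ℤ) : ℂ)
      = ∑ x ∈ univ.filter (fun x : F => x ≠ 0),
          ((quadraticChar F (x - 1) * quadraticChar F (c * x - 1) : ℤ) : ℂ) := by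
    apply Finset.sum_bij (fun j _ => g ^ j)
    · intro j hj
      simp [pow_ne_zero _ hg0]
    · intro j1 h1 j2 h2 hgj
      exact pow_injOn_Iio_orderOf (by rw [hord]; exact Set.mem_Iio.mpr (mem_range.mp h1))
        (by rw [hord]; exact Set.mem_Iio.mpr (mem_range.mp h2)) hgj
    · intro x hx
      obtain ⟨j, hj, hje⟩ := hsurj x (by simpa using hx)
      exact ⟨j, hj, hje⟩
    · intro j _
      rw [mul_comm c (g ^ j)]
  rw [hrangeF]
  have := qlp_corr hF2 hq4 c hc1 hcsq
  rw [← Int.cast_sum] 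
  rw [this]
  norm_num
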